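/- Let c : (0,∞) → ℂ satisfy |c^{(k)}(s)| ≤ C 1_{s ≳ 1} |s|^{-3/2−k} for k = 0, 1 (i.e. c is supported where s ≳ 1). Define G̃(λ, p, q) = c(λp) − e^{iλ(p−q)} c(λq) for p ≥ q > 0. Then for any 0 ≤ τ ≤ 1, |G̃(λ, p, q)| ≤ C' (λ|p−q|)^τ ( 1_{λp ≳ 1} (λp)^{-(3−τ)/2} + 1_{λq ≳ 1} (λq)^{-(3−τ)/2} ). -/

import Mathlib

open Real

lemma my_interp {g K d τ : ℝ} (hg : 0 ≤ g) (hgd : g ≤ K * d) (hgK : g ≤ K)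
    (hd : 0 ≤ d) (hτ0 : 0 ≤ τ) (hτ1 : τ ≤ 1) : g ≤ K * d ^ τ := by
  have hK : 0 ≤ K := le_trans hg hgK
  rcases eq_or_lt_of_le hg with h | h
  · rw [← h]; positivity
  have hK0 : 0 < K := lt_of_lt_of_le h hgK
  have key : g = g ^ τ * g ^ (1 - τ) := by
    rw [← Real.rpow_add h]; norm_num
  calc g = g ^ τ * g ^ (1 - τ) := key
    _ ≤ (K * d) ^ τ * K ^ (1 - τ) :=
        mul_le_mul (Real.rpow_le_rpow hg hgd hτ0)
          (Real.rpow_le_rpow hg hgK (by linarith)) (by positivity) (by positivity)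
    _ = K * d ^ τ := by
        rw [Real.mul_rpow hK0.le hd, mul_right_comm, ← Real.rpow_add hK0]; norm_num

lemma my_pow_aux {s τ : ℝ} (hs : 1 / 4 ≤ s) (hτ0 : 0 ≤ τ) (hτ1 : τ ≤ 1) :
    s ^ (-(3 : ℝ) / 2) ≤ 2 * s ^ (-(3 - τ) / 2) := by
  have hs0 : (0 : ℝ) < s := by linarith
  have h1 : s ^ (-(3 - τ) / 2) = s ^ (-(3 : ℝ) / 2) * s ^ (τ / 2) := by
    rw [← Real.rpow_add hs0]; ring_nf
  have h2 : (1 : ℝ) / 2 ≤ s ^ (τ / 2) := by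
    calc (1 : ℝ) / 2 = (1 / 4 : ℝ) ^ ((1 : ℝ) / 2) := by
          rw [show ((1 : ℝ) / 4) = (1 / 2 : ℝ) ^ (2 : ℕ) by norm_num, ← Real.rpow_natCast (1/2 : ℝ) 2,
            ← Real.rpow_mul (by norm_num)]
          norm_num
      _ ≤ (1 / 4 : ℝ) ^ (τ / 2) :=
          Real.rpow_le_rpow_of_exponent_ge (by norm_num) (by norm_num) (by linarith)
      _ ≤ s ^ (τ / 2) := Real.rpow_le_rpow (by norm_num) hs (by linarith)
  rw [h1]
  nlinarith [Real.rpow_nonneg hs0.le (-(3 : ℝ) / 2),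
    mul_le_mul_of_nonneg_left h2 (Real.rpow_nonneg hs0.le (-(3 : ℝ) / 2))]

lemma my_pow_aux2 {s : ℝ} (hs : 1 / 4 ≤ s) : s ^ (-(5 : ℝ) / 2) ≤ 4 * s ^ (-(3 : ℝ) / 2) := by
  have hs0 : (0 : ℝ) < s := by linarith
  have h1 : s ^ (-(5 : ℝ) / 2) = s⁻¹ * s ^ (-(3 : ℝ) / 2) := by
    rw [← Real.rpow_neg_one s, ← Real.rpow_add hs0]; norm_num
  have h2 : s⁻¹ ≤ 4 := by
    have h := one_div_le_one_div_of_le (by norm_num : (0:ℝ) < 1/4) hs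
    rw [one_div] at h; linarith [h]
  rw [h1]
  nlinarith [Real.rpow_nonneg hs0.le (-(3 : ℝ) / 2)]

lemma my_dtau {d τ : ℝ} (hd : 1 / 8 ≤ d) (hτ0 : 0 ≤ τ) (hτ1 : τ ≤ 1) :
    (1 : ℝ) / 8 ≤ d ^ τ := by
  calc (1:ℝ)/8 = (1/8 : ℝ) ^ (1:ℝ) := by norm_num
    _ ≤ (1/8 : ℝ) ^ τ := Real.rpow_le_rpow_of_exponent_ge (by norm_num) (by norm_num) hτ1
    _ ≤ d ^ τ := Real.rpow_le_rpow (by norm_num) hd hτ0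

lemma my_scale {x y K d : ℝ} (hK : 0 ≤ K) (hxy : x ≤ 2 * y) (hy : 0 ≤ y) (hd : 1/8 ≤ d) :
    K * x ≤ 16 * K * d * y := by
  nlinarith [mul_le_mul_of_nonneg_left hxy hK,
    mul_nonneg (mul_nonneg hK (by linarith : (0:ℝ) ≤ d - 1/8)) hy]

set_option maxHeartbeats 1000000 in
/-- Let `c : (0,∞) → ℂ` be differentiable, vanish for `s < 1/4`, and satisfy
`|c(s)| ≤ C s^{-3/2}`, `|c'(s)| ≤ C s^{-5/2}` for `s > 0`.  With
`G̃(λ, p, q) = c(λp) − e^{iλ(p−q)} c(λq)` for `p ≥ q > 0`, one has for any `0 ≤ τ ≤ 1`: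
`|G̃(λ,p,q)| ≤ C' (λ|p−q|)^τ (1_{λp ≳ 1}(λp)^{-(3−τ)/2} + 1_{λq ≳ 1}(λq)^{-(3−τ)/2})`. -/
theorem high_energy_difference_estimate
    (c : ℝ → ℂ) (C : ℝ)
    (hdiff : Differentiable ℝ c)
    (hsupp : ∀ s : ℝ, s < 1 / 4 → c s = 0)
    (h0 : ∀ s : ℝ, 0 < s → ‖c s‖ ≤ C * s ^ (-(3 : ℝ) / 2))
    (h1 : ∀ s : ℝ, 0 < s → ‖deriv c s‖ ≤ C * s ^ (-(5 : ℝ) / 2)) :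
    ∃ C' : ℝ, ∀ τ : ℝ, 0 ≤ τ → τ ≤ 1 → ∀ lam p q : ℝ, 0 < lam → 0 < q → q ≤ p →
      ‖c (lam * p) - Complex.exp (Complex.I * lam * (p - q)) * c (lam * q)‖ ≤
        C' * (lam * |p - q|) ^ τ *
          ((if 1 / 4 ≤ lam * p then (lam * p) ^ (-(3 - τ) / 2) else 0) +
           (if 1 / 4 ≤ lam * q then (lam * q) ^ (-(3 - τ) / 2) else 0)) := by
  set C₀ := max C 0 with hC₀def
  have hC₀ : 0 ≤ C₀ := le_max_right _ _
  have hCC : C ≤ C₀ := le_max_left _ _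
  have h0' : ∀ s : ℝ, 0 < s → ‖c s‖ ≤ C₀ * s ^ (-(3 : ℝ) / 2) := fun s hs =>
    (h0 s hs).trans (mul_le_mul_of_nonneg_right hCC (Real.rpow_nonneg hs.le _))
  have h1' : ∀ s : ℝ, 0 < s → ‖deriv c s‖ ≤ C₀ * s ^ (-(5 : ℝ) / 2) := fun s hs =>
    (h1 s hs).trans (mul_le_mul_of_nonneg_right hCC (Real.rpow_nonneg hs.le _))
  have hderiv0 : ∀ s : ℝ, s < 1 / 4 → deriv c s = 0 := by
    intro s hs
    have hev : c =ᶠ[nhds s] (fun _ => (0 : ℂ)) := by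
      filter_upwards [Iio_mem_nhds hs] with x hx
      exact hsupp x hx
    rw [hev.deriv_eq]; exact deriv_const s 0
  set F : ℝ → ℂ := fun s => Complex.exp (-(Complex.I * s)) * c s with hFdef
  set F' : ℝ → ℂ := fun s => Complex.exp (-(Complex.I * s)) * (deriv c s - Complex.I * c s)
    with hF'def
  have hFderiv : ∀ s : ℝ, HasDerivAt F (F' s) s := by
    intro s
    have hc := (hdiff s).hasDerivAt
    have h1 : HasDerivAt (fun s : ℝ => (s : ℂ)) 1 s := by
      simpa using (hasDerivAt_id s).ofReal_comp
    have h2 := ((h1.const_mul Complex.I).neg).cexp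
    have h3 := h2.mul hc
    convert h3 using 1
    · rfl
    · rfl
    simp only [hF'def, Pi.neg_apply]
    ring
  have hexp1 : ∀ s : ℝ, ‖Complex.exp (-(Complex.I * s))‖ = 1 := by
    intro s; simp [Complex.norm_exp]
  have hF'bound : ∀ s : ℝ, 0 < s → ‖F' s‖ ≤ 5 * C₀ * s ^ (-(3 : ℝ) / 2) := by
    intro s hs
    have hnorm : ‖F' s‖ ≤ ‖deriv c s‖ + ‖c s‖ := by
      calc ‖F' s‖ = ‖deriv c s - Complex.I * c s‖ := by
            simp only [hF'def]; rw [norm_mul, hexp1, one_mul]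
        _ ≤ ‖deriv c s‖ + ‖Complex.I * c s‖ := norm_sub_le _ _
        _ = ‖deriv c s‖ + ‖c s‖ := by rw [norm_mul, Complex.norm_I, one_mul]
    by_cases hs4 : s < 1 / 4
    · have : F' s = 0 := by
        simp only [hF'def, hsupp s hs4, hderiv0 s hs4]; ring
      rw [this, norm_zero]; positivity
    · push_neg at hs4
      calc ‖F' s‖ ≤ ‖deriv c s‖ + ‖c s‖ := hnorm
        _ ≤ C₀ * s ^ (-(5 : ℝ) / 2) + C₀ * s ^ (-(3 : ℝ) / 2) :=
            add_le_add (h1' s hs) (h0' s hs)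
        _ ≤ C₀ * (4 * s ^ (-(3 : ℝ) / 2)) + C₀ * s ^ (-(3 : ℝ) / 2) := by
            have := my_pow_aux2 hs4
            nlinarith
        _ = 5 * C₀ * s ^ (-(3 : ℝ) / 2) := by ring
  refine ⟨320 * C₀, ?_⟩
  intro τ hτ0 hτ1 lam p q hlam hq hqp
  set a := lam * p with hadef
  set b := lam * q with hbdef
  have hb0 : 0 < b := mul_pos hlam hq
  have hba : b ≤ a := by
    rw [hadef, hbdef]; exact mul_le_mul_of_nonneg_left hqp hlam.le
  have ha0 : 0 < a := lt_of_lt_of_le hb0 hba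
  have hab0 : 0 ≤ a - b := by linarith
  have habs : lam * |p - q| = a - b := by
    rw [abs_of_nonneg (by linarith : (0 : ℝ) ≤ p - q), hadef, hbdef]; ring
  rw [habs]
  -- norm identity
  have e1 : Complex.exp (Complex.I * (a:ℝ)) * Complex.exp (-(Complex.I * (a:ℝ))) = 1 := by
    rw [← Complex.exp_add]; simp
  have e2 : Complex.exp (Complex.I * (a:ℝ)) * Complex.exp (-(Complex.I * (b:ℝ)))
      = Complex.exp (Complex.I * lam * (p - q)) := by
    rw [← Complex.exp_add]; congr 1
    rw [hadef, hbdef]; push_cast; ring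
  have key : c a - Complex.exp (Complex.I * lam * (p - q)) * c b
      = Complex.exp (Complex.I * (a:ℝ)) * (F a - F b) := by
    simp only [hFdef]
    have hring : Complex.exp (Complex.I * (a:ℝ)) *
        (Complex.exp (-(Complex.I * (a:ℝ))) * c a - Complex.exp (-(Complex.I * (b:ℝ))) * c b)
        = (Complex.exp (Complex.I * (a:ℝ)) * Complex.exp (-(Complex.I * (a:ℝ)))) * c a
          - (Complex.exp (Complex.I * (a:ℝ)) * Complex.exp (-(Complex.I * (b:ℝ)))) * c b := by
      ring
    rw [hring, e1, e2, one_mul]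
  have hGnorm : ‖c a - Complex.exp (Complex.I * lam * (p - q)) * c b‖ = ‖F a - F b‖ := by
    rw [key, norm_mul]
    have : ‖Complex.exp (Complex.I * (a:ℝ))‖ = 1 := by
      simp [Complex.norm_exp]
    rw [this, one_mul]
  rw [hGnorm]
  by_cases haq : 1 / 4 ≤ a
  swap
  · -- a < 1/4 : everything vanishes
    push_neg at haq
    have hca : c a = 0 := hsupp a haq
    have hcb : c b = 0 := hsupp b (lt_of_le_of_lt hba haq)
    have hFa : F a - F b = 0 := by simp [hFdef, hca, hcb]
    rw [hFa, norm_zero, if_neg (not_le.mpr haq), if_neg (not_le.mpr (lt_of_le_of_lt hba haq))]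
    simp
  rw [if_pos haq]
  -- bounds on c
  have hca : ‖c a‖ ≤ C₀ * a ^ (-(3 : ℝ) / 2) := h0' a ha0
  have hcb : ‖c b‖ ≤ C₀ * b ^ (-(3 : ℝ) / 2) := by
    by_cases hbq : 1 / 4 ≤ b
    · exact h0' b hb0
    · push_neg at hbq
      rw [hsupp b hbq, norm_zero]; positivity
  have hbase : ∀ x y : ℝ, 0 < x → x ≤ y → y ^ (-(3:ℝ)/2) ≤ x ^ (-(3:ℝ)/2) := by
    intro x y hx hxy
    exact Real.rpow_le_rpow_of_nonpos hx hxy (by norm_num)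
  -- triangle bound
  have htri : ‖F a - F b‖ ≤ 2 * C₀ * b ^ (-(3 : ℝ) / 2) := by
    calc ‖F a - F b‖ ≤ ‖F a‖ + ‖F b‖ := norm_sub_le _ _
      _ = ‖c a‖ + ‖c b‖ := by
          simp only [hFdef]; rw [norm_mul, norm_mul, hexp1, hexp1, one_mul, one_mul]
      _ ≤ C₀ * a ^ (-(3:ℝ)/2) + C₀ * b ^ (-(3:ℝ)/2) := add_le_add hca hcb
      _ ≤ C₀ * b ^ (-(3:ℝ)/2) + C₀ * b ^ (-(3:ℝ)/2) := by
          have := hbase b a hb0 hba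
          nlinarith
      _ = 2 * C₀ * b ^ (-(3:ℝ)/2) := by ring
  -- MVT bound
  have hmvt : ‖F a - F b‖ ≤ 5 * C₀ * b ^ (-(3:ℝ)/2) * (a - b) := by
    have hM : ∀ x ∈ Set.Icc b a, ‖F' x‖ ≤ 5 * C₀ * b ^ (-(3:ℝ)/2) := by
      intro x hx
      have hx0 : 0 < x := lt_of_lt_of_le hb0 hx.1
      calc ‖F' x‖ ≤ 5 * C₀ * x ^ (-(3:ℝ)/2) := hF'bound x hx0
        _ ≤ 5 * C₀ * b ^ (-(3:ℝ)/2) := by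
            have := hbase b x hb0 hx.1
            nlinarith
    have h := Convex.norm_image_sub_le_of_norm_hasDerivWithin_le
      (fun x _ => (hFderiv x).hasDerivWithinAt) hM (convex_Icc b a)
      (Set.left_mem_Icc.mpr hba) (Set.right_mem_Icc.mpr hba)
    calc ‖F a - F b‖ ≤ 5 * C₀ * b ^ (-(3:ℝ)/2) * ‖a - b‖ := h
      _ = 5 * C₀ * b ^ (-(3:ℝ)/2) * (a - b) := by
          rw [Real.norm_eq_abs, abs_of_nonneg hab0]
  -- interpolated bound
  have htri5 : ‖F a - F b‖ ≤ 5 * C₀ * b ^ (-(3:ℝ)/2) := by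
    refine htri.trans ?_
    have h := Real.rpow_nonneg hb0.le (-(3:ℝ)/2)
    nlinarith
  have hint : ‖F a - F b‖ ≤ 5 * C₀ * b ^ (-(3:ℝ)/2) * (a - b) ^ τ :=
    my_interp (norm_nonneg _) hmvt htri5 hab0 hτ0 hτ1
  have hrpow_pos : (0:ℝ) < b ^ (-(3:ℝ)/2) := Real.rpow_pos_of_pos hb0 _
  have hd_nonneg : (0:ℝ) ≤ (a - b) ^ τ := Real.rpow_nonneg hab0 _
  have hAτ : (0:ℝ) ≤ a ^ (-(3 - τ)/2) := Real.rpow_nonneg ha0.le _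
  by_cases hbig : b ≤ a / 2
  · -- well-separated case: direct bound
    have hd8 : (1:ℝ)/8 ≤ a - b := by linarith
    have hdτ : (1:ℝ)/8 ≤ (a - b) ^ τ := my_dtau hd8 hτ0 hτ1
    have haux := my_pow_aux haq hτ0 hτ1
    have hA : C₀ * a ^ (-(3:ℝ)/2) ≤ 16 * C₀ * (a - b) ^ τ * a ^ (-(3 - τ)/2) :=
      my_scale hC₀ haux hAτ hdτ
    have hB : ‖c b‖ ≤ 16 * C₀ * (a - b) ^ τ * (if 1 / 4 ≤ b then b ^ (-(3 - τ)/2) else 0) := by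
      by_cases hbq : 1 / 4 ≤ b
      · rw [if_pos hbq]
        have haux2 := my_pow_aux hbq hτ0 hτ1
        exact (h0' b hb0).trans (my_scale hC₀ haux2 (Real.rpow_nonneg hb0.le _) hdτ)
      · rw [if_neg hbq, hsupp b (not_le.1 hbq), norm_zero]; simp
    calc ‖F a - F b‖ ≤ ‖c a‖ + ‖c b‖ := by
          refine (norm_sub_le _ _).trans ?_
          simp only [hFdef]; rw [norm_mul, norm_mul, hexp1, hexp1, one_mul, one_mul]
      _ ≤ 16 * C₀ * (a - b) ^ τ * a ^ (-(3 - τ)/2)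
            + 16 * C₀ * (a - b) ^ τ * (if 1 / 4 ≤ b then b ^ (-(3 - τ)/2) else 0) :=
          add_le_add (hca.trans hA) hB
      _ = 16 * C₀ * (a - b) ^ τ * (a ^ (-(3 - τ)/2) + (if 1 / 4 ≤ b then b ^ (-(3 - τ)/2) else 0)) := by ring
      _ ≤ 320 * C₀ * (a - b) ^ τ * (a ^ (-(3 - τ)/2) + (if 1 / 4 ≤ b then b ^ (-(3 - τ)/2) else 0)) := by
          have hBite : (0:ℝ) ≤ (if 1 / 4 ≤ b then b ^ (-(3 - τ)/2) else 0) := by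
            split
            · exact Real.rpow_nonneg hb0.le _
            · exact le_refl 0
          have hpos := add_nonneg hAτ hBite
          nlinarith [mul_nonneg (mul_nonneg hC₀ hd_nonneg) hpos]
  · push_neg at hbig
    by_cases hbq : 1 / 4 ≤ b
    · -- use b-term
      rw [if_pos hbq]
      have haux2 := my_pow_aux hbq hτ0 hτ1
      refine hint.trans ?_
      have hBτ : (0:ℝ) ≤ b ^ (-(3 - τ)/2) := Real.rpow_nonneg hb0.le _
      nlinarith [mul_le_mul_of_nonneg_left haux2 (mul_nonneg hC₀ hd_nonneg),
        mul_nonneg (mul_nonneg hC₀ hd_nonneg) hAτ,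
        mul_nonneg (mul_nonneg hC₀ hd_nonneg) hBτ]
    · -- 1/8 < b < 1/4, 1/4 ≤ a < 1/2
      push_neg at hbq
      rw [if_neg (not_le.mpr hbq)]
      have hb8 : (1:ℝ)/8 < b := by linarith
      have ha1 : a < 1/2 := by linarith
      have hone : (1:ℝ) ≤ a ^ (-(3 - τ)/2) :=
        Real.one_le_rpow_of_pos_of_le_one_of_nonpos ha0 (by linarith) (by linarith)
      have hb64 : b ^ (-(3:ℝ)/2) ≤ 64 := by
        calc b ^ (-(3:ℝ)/2) ≤ b ^ (-(2:ℝ)) := by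
              apply Real.rpow_le_rpow_of_exponent_ge hb0 (by linarith) (by norm_num)
          _ = (b ^ (2:ℕ))⁻¹ := by
              rw [show (-2:ℝ) = -((2:ℕ):ℝ) by norm_num, Real.rpow_neg hb0.le, Real.rpow_natCast]
          _ ≤ 64 := by
              rw [inv_le_comm₀ (by positivity) (by norm_num)]
              nlinarith
      refine hint.trans ?_
      nlinarith [mul_le_mul_of_nonneg_left hb64 (mul_nonneg hC₀ hd_nonneg),
        mul_le_mul_of_nonneg_left hone (mul_nonneg hC₀ hd_nonneg)]
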